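/- Let k be a field of characteristic zero and B = k[X,Y] the polynomial ring in two variables over k. Then there exists a degree function deg : B → ℤ ∪ {−∞} such that deg(λ) = 0 for all λ ∈ k \ {0}, and such that the only k-derivation D : B → B for which deg(D) is defined is the zero derivation. -/

import Mathlib

section DegreePrelude

variable {B : Type*} [CommRing B] {G : Type*} [AddCommGroup G] [LinearOrder G] [IsOrderedAddMonoid G]

/-- A degree function on `B` with values in `G ∪ {-∞}` -/
def IsDegreeFunction (deg : B → WithBot G) : Prop :=
  (∀ x : B, deg x = ⊥ ↔ x = 0) ∧
  (∀ x y : B, deg (x * y) = deg x + deg y) ∧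
  (∀ x y : B, deg (x + y) ≤ max (deg x) (deg y))

/-- `degDelta deg D x = deg (D x) - deg x` (with value `-∞` if `D x = 0`). -/
noncomputable def degDelta (deg : B → WithBot G) (D : B → B) (x : B) : WithBot G :=
  (deg (D x)).map fun a => a - (deg x).unbotD 0

/-- The set `{deg (D x) - deg x : x ∈ B \ {0}}`. -/
def degDeltaSet (deg : B → WithBot G) (D : B → B) : Set (WithBot G) :=
  {m | ∃ x : B, x ≠ 0 ∧ degDelta deg D x = m}

/-- `deg (D)` is defined, i.e. the set `{deg (D x) - deg x : x ≠ 0}` has a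
greatest element in `G ∪ {-∞}`. -/
def DegreeDefinedAt (deg : B → WithBot G) (D : B → B) : Prop :=
  ∃ M, IsGreatest (degDeltaSet deg D) M

end DegreePrelude

namespace DegProof

noncomputable section

open scoped Classical
set_option linter.unusedSectionVars false

open MvPolynomial Finset

/-- the gap sequence: `cc n = (n+1)!` -/
def cc (n : ℕ) : ℕ := (n+1).factorial

lemma cc_strictMono : StrictMono cc := fun a b h =>
  (Nat.factorial_lt (by omega)).2 (by omega)

lemma one_le_cc (n : ℕ) : 1 ≤ cc n := Nat.factorial_pos _

lemma cc_succ (n : ℕ) : cc (n+1) = (n+2) * cc n := Nat.factorial_succ _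

lemma lt_cc (n : ℕ) : n < cc n := lt_of_lt_of_le (by omega) (Nat.self_le_factorial (n+1))

lemma cc_growth (a b : ℕ) : ∃ N, ∀ n, N ≤ n → a * cc n + b < cc (n+1) := by
  refine ⟨a + b, fun n hn => ?_⟩
  have h1 : 1 ≤ cc n := one_le_cc n
  have h2 : cc (n+1) = (n+2) * cc n := cc_succ n
  nlinarith

variable (k : Type*) [Field k] [CharZero k]

/-- tail of the lacunary series: `rho n = ∑_{i ≥ n} t^(cc i)` -/
def rho (n : ℕ) : PowerSeries k :=
  PowerSeries.mk fun j => if ∃ i, n ≤ i ∧ cc i = j then (1:k) else 0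

/-- tail of the derivative: `rho' n = ∑_{i ≥ n} cc i * t^(cc i - 1)` -/
def rho' (n : ℕ) : PowerSeries k :=
  PowerSeries.mk fun j => if ∃ i, n ≤ i ∧ cc i = j + 1 then ((j:k)+1) else 0

def ss : PowerSeries k := rho k 0

def ss' : PowerSeries k := rho' k 0

def sig (n : ℕ) : PowerSeries k := ∑ i ∈ range n, (PowerSeries.X) ^ (cc i)

def sig' (n : ℕ) : PowerSeries k := ∑ i ∈ range n, (cc i : k) • (PowerSeries.X) ^ (cc i - 1)

lemma rho_succ (n : ℕ) :
    rho k n = PowerSeries.X ^ (cc n) + rho k (n+1) := by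
  ext j
  rw [map_add, PowerSeries.coeff_X_pow]
  simp only [rho, PowerSeries.coeff_mk]
  by_cases hj : j = cc n
  · subst hj
    have h1 : ∃ i, n ≤ i ∧ cc i = cc n := ⟨n, le_refl _, rfl⟩
    have h2 : ¬ ∃ i, n + 1 ≤ i ∧ cc i = cc n := by
      rintro ⟨i, hi, hic⟩
      have := cc_strictMono.injective hic
      omega
    simp [h1, h2]
    intro x hx hxc; exact h2 ⟨x, by omega, hxc⟩
  · have hiff : (∃ i, n ≤ i ∧ cc i = j) ↔ ∃ i, n + 1 ≤ i ∧ cc i = j := by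
      constructor
      · rintro ⟨i, hi, rfl⟩
        refine ⟨i, ?_, rfl⟩
        rcases Nat.eq_or_lt_of_le hi with h | h
        · exact absurd (by rw [h]) hj
        · omega
      · rintro ⟨i, hi, rfl⟩; exact ⟨i, by omega, rfl⟩
    rw [if_neg (by omega : ¬ j = cc n), zero_add]
    by_cases h : ∃ i, n ≤ i ∧ cc i = j
    · rw [if_pos h, if_pos (hiff.1 h)]
    · rw [if_neg h, if_neg (fun hx => h (hiff.2 hx))]

lemma rho'_succ (n : ℕ) :
    rho' k n = (cc n : k) • PowerSeries.X ^ (cc n - 1) + rho' k (n+1) := by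
  ext j
  rw [map_add, map_smul, PowerSeries.coeff_X_pow, smul_eq_mul]
  simp only [rho', PowerSeries.coeff_mk]
  have h1 : 1 ≤ cc n := one_le_cc n
  by_cases hj : j = cc n - 1
  · subst hj
    have hjc : cc n - 1 + 1 = cc n := by omega
    have hx1 : ∃ i, n ≤ i ∧ cc i = cc n - 1 + 1 := ⟨n, le_refl _, by omega⟩
    have hx2 : ¬ ∃ i, n + 1 ≤ i ∧ cc i = cc n - 1 + 1 := by
      rintro ⟨i, hi, hic⟩
      rw [hjc] at hic
      have := cc_strictMono.injective hic
      omega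
    rw [if_pos hx1, if_neg hx2, if_pos rfl, add_zero, mul_one]
    rw [← hjc]
    push_cast
    ring
  · have hiff : (∃ i, n ≤ i ∧ cc i = j + 1) ↔ ∃ i, n + 1 ≤ i ∧ cc i = j + 1 := by
      constructor
      · rintro ⟨i, hi, hie⟩
        refine ⟨i, ?_, hie⟩
        rcases Nat.eq_or_lt_of_le hi with h | h
        · exfalso; apply hj; rw [← h] at hie; omega
        · omega
      · rintro ⟨i, hi, hie⟩; exact ⟨i, by omega, hie⟩
    rw [if_neg hj, mul_zero, zero_add]
    by_cases h : ∃ i, n ≤ i ∧ cc i = j + 1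
    · rw [if_pos h, if_pos (hiff.1 h)]
    · rw [if_neg h, if_neg (fun hx => h (hiff.2 hx))]

lemma X_pow_dvd_rho (n : ℕ) : (PowerSeries.X : PowerSeries k) ^ (cc n) ∣ rho k n := by
  rw [PowerSeries.X_pow_dvd_iff]
  intro j hj
  simp only [rho, PowerSeries.coeff_mk]
  rw [if_neg]
  rintro ⟨i, hi, rfl⟩
  have : cc n ≤ cc i := cc_strictMono.le_iff_le.2 hi
  omega

lemma X_pow_dvd_rho' (n : ℕ) : (PowerSeries.X : PowerSeries k) ^ (cc n - 1) ∣ rho' k n := by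
  rw [PowerSeries.X_pow_dvd_iff]
  intro j hj
  simp only [rho', PowerSeries.coeff_mk]
  rw [if_neg]
  rintro ⟨i, hi, hie⟩
  have : cc n ≤ cc i := cc_strictMono.le_iff_le.2 hi
  omega

lemma coeff_rho_self (n : ℕ) : PowerSeries.coeff (cc n) (rho k n) = 1 := by
  simp only [rho, PowerSeries.coeff_mk]
  rw [if_pos ⟨n, le_refl _, rfl⟩]

lemma rho_ne_zero (n : ℕ) : rho k n ≠ 0 := by
  intro h
  have := coeff_rho_self k n
  rw [h, map_zero] at this
  exact one_ne_zero this.symm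

lemma ss_sub_sig (n : ℕ) : ss k - sig k n = rho k n := by
  induction n with
  | zero => simp [sig, ss]
  | succ n ih =>
    have hs : sig k (n+1) = sig k n + PowerSeries.X ^ (cc n) := by
      rw [sig, sig, Finset.sum_range_succ]
    have hr : rho k (n+1) = rho k n - PowerSeries.X ^ (cc n) := by
      rw [rho_succ k n]; ring
    rw [hs, hr, ← ih]; ring

lemma ss_eq (n : ℕ) : ss k = sig k n + rho k n := by
  rw [← ss_sub_sig k n]; ring

lemma ss'_sub_sig' (n : ℕ) : ss' k - sig' k n = rho' k n := by
  induction n with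
  | zero => simp [sig', ss']
  | succ n ih =>
    have hs : sig' k (n+1) = sig' k n + (cc n : k) • PowerSeries.X ^ (cc n - 1) := by
      rw [sig', sig', Finset.sum_range_succ]
    have hr : rho' k (n+1) = rho' k n - (cc n : k) • PowerSeries.X ^ (cc n - 1) := by
      rw [rho'_succ k n]; ring
    rw [hs, hr, ← ih]; ring

lemma coeff_sig_cc (i n : ℕ) :
    PowerSeries.coeff (cc i) (sig k n) = if i < n then 1 else 0 := by
  rw [sig, map_sum]
  have : ∀ t ∈ range n, PowerSeries.coeff (cc i) (PowerSeries.X ^ cc t)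
      = if t = i then (1:k) else 0 := by
    intro t _
    rw [PowerSeries.coeff_X_pow]
    congr 1
    simp [eq_comm, cc_strictMono.injective.eq_iff]
  rw [Finset.sum_congr rfl this, Finset.sum_ite_eq' (range n) i (fun _ => (1:k))]
  simp [Finset.mem_range]

lemma sig_injective : Function.Injective (sig k) := by
  intro a b hab
  by_contra hne
  rcases lt_or_gt_of_ne hne with h | h
  · have := coeff_sig_cc k a a
    rw [hab] at this
    rw [coeff_sig_cc] at this
    simp [lt_irrefl, h] at this
  · have := coeff_sig_cc k b b
    rw [← hab] at this
    rw [coeff_sig_cc] at this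
    simp [lt_irrefl, h] at this

/-! ### coefficient helpers -/

lemma coeff_zero_of_X_pow_dvd {N : ℕ} {x : PowerSeries k}
    (h : (PowerSeries.X : PowerSeries k) ^ N ∣ x) {j : ℕ} (hj : j < N) :
    PowerSeries.coeff j x = 0 :=
  (PowerSeries.X_pow_dvd_iff.1 h) j hj

lemma X_pow_dvd_of_coeff {N : ℕ} {x : PowerSeries k}
    (h : ∀ j, j < N → PowerSeries.coeff j x = 0) :
    (PowerSeries.X : PowerSeries k) ^ N ∣ x :=
  PowerSeries.X_pow_dvd_iff.2 h

lemma coeff_eq_of_sub_dvd {N : ℕ} {x y : PowerSeries k}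
    (h : (PowerSeries.X : PowerSeries k) ^ N ∣ x - y) {j : ℕ} (hj : j < N) :
    PowerSeries.coeff j x = PowerSeries.coeff j y := by
  have := coeff_zero_of_X_pow_dvd k h hj
  rw [map_sub] at this
  exact sub_eq_zero.mp this

lemma X_pow_dvd_mul_congr {N : ℕ} {x y u v : PowerSeries k}
    (h1 : (PowerSeries.X : PowerSeries k) ^ N ∣ x - y)
    (h2 : (PowerSeries.X : PowerSeries k) ^ N ∣ u - v) :
    (PowerSeries.X : PowerSeries k) ^ N ∣ x * u - y * v := by
  have : x * u - y * v = x * (u - v) + (x - y) * v := by ring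
  rw [this]
  exact dvd_add (Dvd.dvd.mul_left h2 x) (Dvd.dvd.mul_right h1 v)

lemma coeff_mul_orders {x y : PowerSeries k} {a b : ℕ}
    (hx : ∀ j, j < a → PowerSeries.coeff j x = 0)
    (hy : ∀ j, j < b → PowerSeries.coeff j y = 0) :
    PowerSeries.coeff (a + b) (x * y) = PowerSeries.coeff a x * PowerSeries.coeff b y := by
  rw [PowerSeries.coeff_mul]
  apply Finset.sum_eq_single_of_mem (a, b) (Finset.HasAntidiagonal.mem_antidiagonal.2 rfl)
  rintro ⟨p, q⟩ hpq hne
  have hs : p + q = a + b := Finset.HasAntidiagonal.mem_antidiagonal.1 hpq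
  have : p < a ∨ q < b := by
    by_contra hc
    push_neg at hc
    have : p = a ∧ q = b := by omega
    exact hne (by simp [this.1, this.2])
  rcases this with h | h
  · rw [hx p h, zero_mul]
  · rw [hy q h, mul_zero]

lemma coeff_mul_lt {x y : PowerSeries k} {a b j : ℕ}
    (hx : ∀ i, i < a → PowerSeries.coeff i x = 0)
    (hy : ∀ i, i < b → PowerSeries.coeff i y = 0)
    (hj : j < a + b) :
    PowerSeries.coeff j (x * y) = 0 := by
  rw [PowerSeries.coeff_mul]
  apply Finset.sum_eq_zero
  rintro ⟨p, q⟩ hpq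
  have hs : p + q = j := Finset.HasAntidiagonal.mem_antidiagonal.1 hpq
  have : p < a ∨ q < b := by omega
  rcases this with h | h
  · rw [hx p h, zero_mul]
  · rw [hy q h, mul_zero]

/-! ### the order of a nonzero power series -/

lemma exists_coeff_ne {x : PowerSeries k} (hx : x ≠ 0) : ∃ j, PowerSeries.coeff j x ≠ 0 := by
  by_contra h
  push_neg at h
  exact hx (PowerSeries.ext fun n => by rw [h n, map_zero])

def ordN (x : PowerSeries k) : ℕ :=
  if hx : x = 0 then 0 else Nat.find (exists_coeff_ne k hx)

lemma coeff_ordN_ne {x : PowerSeries k} (hx : x ≠ 0) :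
    PowerSeries.coeff (ordN k x) x ≠ 0 := by
  rw [ordN, dif_neg hx]
  exact Nat.find_spec (exists_coeff_ne k hx)

lemma coeff_lt_ordN {x : PowerSeries k} {j : ℕ} (hj : j < ordN k x) :
    PowerSeries.coeff j x = 0 := by
  by_cases hx : x = 0
  · rw [hx, map_zero]
  · rw [ordN, dif_neg hx] at hj
    have := Nat.find_min (exists_coeff_ne k hx) hj
    push_neg at this
    exact this

lemma ordN_unique {x : PowerSeries k} {m : ℕ}
    (h1 : PowerSeries.coeff m x ≠ 0)
    (h2 : ∀ j, j < m → PowerSeries.coeff j x = 0) :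
    ordN k x = m := by
  have hx : x ≠ 0 := fun h => h1 (by rw [h, map_zero])
  rw [ordN, dif_neg hx]
  rw [Nat.find_eq_iff]
  exact ⟨h1, fun j hj => by push_neg; exact h2 j hj⟩

lemma ordN_mul {x y : PowerSeries k} (hx : x ≠ 0) (hy : y ≠ 0) :
    ordN k (x * y) = ordN k x + ordN k y := by
  apply ordN_unique
  · rw [coeff_mul_orders k (fun j hj => coeff_lt_ordN k hj) (fun j hj => coeff_lt_ordN k hj)]
    exact mul_ne_zero (coeff_ordN_ne k hx) (coeff_ordN_ne k hy)
  · intro j hj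
    exact coeff_mul_lt k (fun i hi => coeff_lt_ordN k hi) (fun i hi => coeff_lt_ordN k hi) hj

lemma ordN_rho (n : ℕ) : ordN k (rho k n) = cc n := by
  apply ordN_unique
  · rw [coeff_rho_self]; exact one_ne_zero
  · intro j hj
    exact coeff_zero_of_X_pow_dvd k (X_pow_dvd_rho k n) hj

/-! ### degree bounds -/

def DegLe (N : ℕ) (x : PowerSeries k) : Prop :=
  ∀ j, N < j → PowerSeries.coeff j x = 0

lemma degLe_mono {N M : ℕ} {x : PowerSeries k} (h : DegLe k N x) (hNM : N ≤ M) :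
    DegLe k M x := fun j hj => h j (by omega)

lemma degLe_add {N : ℕ} {x y : PowerSeries k} (hx : DegLe k N x) (hy : DegLe k N y) :
    DegLe k N (x + y) := fun j hj => by rw [map_add, hx j hj, hy j hj, add_zero]

lemma degLe_sub {N : ℕ} {x y : PowerSeries k} (hx : DegLe k N x) (hy : DegLe k N y) :
    DegLe k N (x - y) := fun j hj => by rw [map_sub, hx j hj, hy j hj, sub_zero]

lemma degLe_zero (N : ℕ) : DegLe k N (0 : PowerSeries k) := fun j _ => by rw [map_zero]

lemma degLe_smul {N : ℕ} {x : PowerSeries k} (a : k) (hx : DegLe k N x) :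
    DegLe k N (a • x) := fun j hj => by rw [map_smul, hx j hj, smul_zero]

lemma degLe_mul {N M : ℕ} {x y : PowerSeries k} (hx : DegLe k N x) (hy : DegLe k M y) :
    DegLe k (N + M) (x * y) := by
  intro j hj
  rw [PowerSeries.coeff_mul]
  apply Finset.sum_eq_zero
  rintro ⟨p, q⟩ hpq
  have hs : p + q = j := Finset.HasAntidiagonal.mem_antidiagonal.1 hpq
  have : N < p ∨ M < q := by omega
  rcases this with h | h
  · rw [hx p h, zero_mul]
  · rw [hy q h, mul_zero]

lemma degLe_X_pow (p : ℕ) : DegLe k p ((PowerSeries.X : PowerSeries k) ^ p) := by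
  intro j hj
  rw [PowerSeries.coeff_X_pow, if_neg (by omega)]

lemma degLe_X {d : ℕ} (hd : 1 ≤ d) : DegLe k d (PowerSeries.X : PowerSeries k) := by
  have := degLe_X_pow k 1
  rw [pow_one] at this
  exact degLe_mono k this hd

lemma degLe_C (a : k) : DegLe k 0 (PowerSeries.C a) := by
  intro j hj
  rw [PowerSeries.coeff_C, if_neg (by omega)]

lemma degLe_sum {N : ℕ} {α : Type*} {s : Finset α} {x : α → PowerSeries k}
    (h : ∀ i ∈ s, DegLe k N (x i)) : DegLe k N (∑ i ∈ s, x i) := by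
  intro j hj
  rw [map_sum]
  exact Finset.sum_eq_zero fun i hi => h i hi j hj

lemma degLe_sig (n : ℕ) : DegLe k (cc n) (sig k (n+1)) := by
  apply degLe_sum
  intro i hi
  have : cc i ≤ cc n := cc_strictMono.le_iff_le.2 (by
    have := Finset.mem_range.1 hi; omega)
  exact degLe_mono k (degLe_X_pow k (cc i)) this

lemma degLe_sig' (n : ℕ) : DegLe k (cc n) (sig' k (n+1)) := by
  apply degLe_sum
  intro i hi
  apply degLe_smul
  have : cc i ≤ cc n := cc_strictMono.le_iff_le.2 (by
    have := Finset.mem_range.1 hi; omega)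
  exact degLe_mono k (degLe_X_pow k (cc i - 1)) (by omega)

lemma degLe_prod {α : Type*} {s : Finset α} {N : α → ℕ} {x : α → PowerSeries k}
    (h : ∀ i ∈ s, DegLe k (N i) (x i)) :
    DegLe k (∑ i ∈ s, N i) (∏ i ∈ s, x i) := by
  induction s using Finset.cons_induction with
  | empty =>
    simp only [Finset.sum_empty, Finset.prod_empty]
    intro j hj
    rw [PowerSeries.coeff_one, if_neg (by omega)]
  | cons a s ha ih =>
    rw [Finset.sum_cons, Finset.prod_cons]
    exact degLe_mul k (h a (Finset.mem_cons_self a s))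
      (ih fun i hi => h i (Finset.mem_cons_of_mem hi))

lemma eq_zero_of_degLe {N : ℕ} {x : PowerSeries k} (h1 : DegLe k N x)
    (h2 : (PowerSeries.X : PowerSeries k) ^ (N + 1) ∣ x) : x = 0 := by
  ext j
  rw [map_zero]
  rcases le_or_gt j N with hj | hj
  · exact coeff_zero_of_X_pow_dvd k h2 (by omega)
  · exact h1 j hj

lemma degLe_aeval {d : ℕ} {x0 x1 : PowerSeries k} (h0 : DegLe k d x0) (h1 : DegLe k d x1)
    (p : MvPolynomial (Fin 2) k) :
    DegLe k (p.totalDegree * d) (aeval ![x0, x1] p) := by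
  rw [aeval_def, eval₂_eq]
  apply degLe_sum
  intro m hm
  have hterm : DegLe k (0 + ∑ i ∈ m.support, m i * d)
      (algebraMap k (PowerSeries k) (MvPolynomial.coeff m p) *
        ∏ i ∈ m.support, (![x0, x1] i) ^ (m i)) := by
    apply degLe_mul
    · exact degLe_C k _
    · apply degLe_prod
      intro i hi
      have : DegLe k d (![x0, x1] i) := by
        fin_cases i
        · exact h0
        · exact h1
      -- power
      have hp : DegLe k (m i * d) ((![x0, x1] i) ^ (m i)) := by
        induction (m i) with
        | zero =>
          intro j hj
          rw [pow_zero, PowerSeries.coeff_one, if_neg (by omega)]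
        | succ t iht =>
          rw [pow_succ]
          have := degLe_mul k iht this
          have heq : t * d + d = (t+1) * d := by ring
          rw [heq] at this
          exact this
      exact hp
  apply degLe_mono k hterm
  rw [zero_add]
  have hsum : ∑ i ∈ m.support, m i * d = (∑ i ∈ m.support, m i) * d := by
    rw [Finset.sum_mul]
  rw [hsum]
  apply Nat.mul_le_mul_right
  exact MvPolynomial.le_totalDegree hm

/-! ### the substitution maps -/

def Phi : MvPolynomial (Fin 2) k →ₐ[k] PowerSeries k :=
  aeval ![PowerSeries.X, ss k]

def Psi : MvPolynomial (Fin 2) k →ₐ[k] Polynomial (PowerSeries k) :=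
  aeval ![Polynomial.C PowerSeries.X, Polynomial.X]

lemma eval_Psi (y : PowerSeries k) (p : MvPolynomial (Fin 2) k) :
    Polynomial.eval y (Psi k p) = (aeval ![PowerSeries.X, y]) p := by
  have hcomp : ((Polynomial.aeval y).restrictScalars k).comp (Psi k)
      = aeval ![PowerSeries.X, y] := by
    apply MvPolynomial.algHom_ext
    intro i
    fin_cases i <;> simp [Psi]
  have h := AlgHom.congr_fun hcomp p
  simp only [AlgHom.comp_apply, AlgHom.coe_restrictScalars'] at h
  rw [← h]
  rw [← Polynomial.coe_aeval_eq_eval]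

lemma Phi_eval (p : MvPolynomial (Fin 2) k) :
    Phi k p = Polynomial.eval (ss k) (Psi k p) := (eval_Psi k (ss k) p).symm

lemma Psi_injective : Function.Injective (Psi k) := by
  classical
  set e1 := renameEquiv k (Equiv.swap (0 : Fin 2) 1) with he1
  set e2 := MvPolynomial.finSuccEquiv k 1 with he2
  set e3 := renameEquiv k (Equiv.equivPUnit.{1,1} (Fin 1)) with he3
  set e4 := MvPolynomial.pUnitAlgEquiv k with he4
  set iota : MvPolynomial (Fin 1) k →ₐ[k] PowerSeries k :=
    (Polynomial.coeToPowerSeries.algHom k).comp ((e4.toAlgHom).comp e3.toAlgHom) with hiota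
  have hcoe_inj : Function.Injective (Polynomial.coeToPowerSeries.algHom (R := k) k) := by
    intro a b hab
    rw [Polynomial.coeToPowerSeries.algHom_apply, Polynomial.coeToPowerSeries.algHom_apply,
      Algebra.algebraMap_self] at hab
    simpa [PowerSeries.map_id] using hab
  have hiota_inj : Function.Injective iota := by
    rw [hiota]
    simp only [AlgHom.coe_comp]
    exact hcoe_inj.comp ((e4.injective).comp (e3.injective))
  set Psi' : MvPolynomial (Fin 2) k →ₐ[k] Polynomial (PowerSeries k) :=
    (Polynomial.mapAlgHom iota).comp ((e2.toAlgHom).comp e1.toAlgHom) with hPsi'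
  have hPsi'_inj : Function.Injective Psi' := by
    rw [hPsi']
    simp only [AlgHom.coe_comp]
    apply Function.Injective.comp
    · show Function.Injective (Polynomial.mapAlgHom iota)
      have : ⇑(Polynomial.mapAlgHom iota) = Polynomial.map (iota : MvPolynomial (Fin 1) k →+* PowerSeries k) := rfl
      rw [this]
      exact Polynomial.map_injective _ hiota_inj
    · exact (e2.injective).comp (e1.injective)
  have heq : Psi k = Psi' := by
    apply MvPolynomial.algHom_ext
    intro i
    fin_cases i
    · show Psi k (X 0) = Psi' (X 0)
      have h1 : Psi k (X 0) = Polynomial.C PowerSeries.X := by simp [Psi]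
      have h2 : Psi' (X 0) = Polynomial.C PowerSeries.X := by
        rw [hPsi']
        simp only [AlgHom.comp_apply, AlgEquiv.toAlgHom_eq_coe, AlgHom.coe_coe, AlgEquiv.coe_algHom]
        rw [he1]
        rw [renameEquiv_apply, rename_X]
        have hsw : Equiv.swap (0 : Fin 2) 1 0 = 1 := Equiv.swap_apply_left 0 1
        rw [hsw]
        have hfs : (1 : Fin 2) = Fin.succ 0 := rfl
        rw [hfs, he2, MvPolynomial.finSuccEquiv_X_succ]
        have hmap : ∀ q, (Polynomial.mapAlgHom iota) q
            = Polynomial.map (iota : MvPolynomial (Fin 1) k →+* PowerSeries k) q := fun q => rfl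
        rw [hmap, Polynomial.map_C]
        congr 1
        simp [hiota, he3, he4, MvPolynomial.pUnitAlgEquiv, rename_X,
          Polynomial.coeToPowerSeries.algHom_apply, Algebra.algebraMap_self,
          PowerSeries.map_id, Polynomial.coe_X]
      rw [h1, h2]
    · show Psi k (X 1) = Psi' (X 1)
      have h1 : Psi k (X 1) = Polynomial.X := by simp [Psi]
      have h2 : Psi' (X 1) = Polynomial.X := by
        rw [hPsi']
        simp only [AlgHom.comp_apply, AlgEquiv.toAlgHom_eq_coe, AlgHom.coe_coe, AlgEquiv.coe_algHom]
        rw [he1, renameEquiv_apply, rename_X]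
        have hsw : Equiv.swap (0 : Fin 2) 1 1 = 0 := Equiv.swap_apply_right 0 1
        rw [hsw]
        rw [he2, MvPolynomial.finSuccEquiv_X_zero]
        have hmap : ∀ q, (Polynomial.mapAlgHom iota) q
            = Polynomial.map (iota : MvPolynomial (Fin 1) k →+* PowerSeries k) q := fun q => rfl
        rw [hmap, Polynomial.map_X]
      rw [h1, h2]
  rw [heq]
  exact hPsi'_inj

lemma Phi_eq_zero {p : MvPolynomial (Fin 2) k} (hp : Phi k p = 0) : p = 0 := by
  by_contra hpne
  have hQ : Psi k p ≠ 0 := by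
    intro h
    exact hpne (Psi_injective k (by rw [h, map_zero]))
  obtain ⟨N, hN⟩ := cc_growth p.totalDegree 1
  have hroot : ∀ n, N ≤ n → Polynomial.IsRoot (Psi k p) (sig k (n+1)) := by
    intro n hn
    have hdvd1 : (PowerSeries.X : PowerSeries k) ^ (cc (n+1)) ∣ sig k (n+1) - ss k := by
      have : sig k (n+1) - ss k = -(rho k (n+1)) := by
        rw [← ss_sub_sig k (n+1)]; ring
      rw [this]
      exact dvd_neg.2 (X_pow_dvd_rho k (n+1))
    have hdvd2 : (PowerSeries.X : PowerSeries k) ^ (cc (n+1)) ∣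
        Polynomial.eval (sig k (n+1)) (Psi k p) := by
      have h3 := Polynomial.sub_dvd_eval_sub (sig k (n+1)) (ss k) (Psi k p)
      have h4 : Polynomial.eval (ss k) (Psi k p) = 0 := by rw [← Phi_eval, hp]
      rw [h4, sub_zero] at h3
      exact dvd_trans hdvd1 h3
    have hdeg : DegLe k (p.totalDegree * cc n) (Polynomial.eval (sig k (n+1)) (Psi k p)) := by
      rw [eval_Psi]
      exact degLe_aeval k (degLe_X k (one_le_cc n)) (degLe_sig k n) p
    have hle : p.totalDegree * cc n + 1 ≤ cc (n+1) := le_of_lt (by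
      have := hN n hn; omega)
    apply eq_zero_of_degLe k hdeg
    exact dvd_trans (pow_dvd_pow _ hle) hdvd2
  have hinf : Set.Infinite {x : PowerSeries k | Polynomial.IsRoot (Psi k p) x} := by
    apply Set.infinite_of_injective_forall_mem (f := fun j : ℕ => sig k (j + N + 1))
    · intro a b hab
      have := sig_injective k hab
      omega
    · intro j
      exact hroot (j + N) (by omega)
  exact hinf (Polynomial.finite_setOf_isRoot hQ)

lemma Phi_injective : Function.Injective (Phi k) := by
  intro a b hab
  have : Phi k (a - b) = 0 := by rw [map_sub, hab, sub_self]
  have := Phi_eq_zero k this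
  exact sub_eq_zero.mp this

/-! ### the degree function -/

def deg (p : MvPolynomial (Fin 2) k) : WithBot ℤ :=
  if p = 0 then ⊥ else ((-(ordN k (Phi k p) : ℤ) : ℤ) : WithBot ℤ)

lemma deg_of_ne {p : MvPolynomial (Fin 2) k} (hp : p ≠ 0) :
    deg k p = ((-(ordN k (Phi k p) : ℤ) : ℤ) : WithBot ℤ) := if_neg hp

lemma Phi_ne {p : MvPolynomial (Fin 2) k} (hp : p ≠ 0) : Phi k p ≠ 0 :=
  fun h => hp (Phi_eq_zero k h)

lemma deg_bot_iff (p : MvPolynomial (Fin 2) k) : deg k p = ⊥ ↔ p = 0 := by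
  constructor
  · intro h
    by_contra hp
    rw [deg_of_ne k hp] at h
    exact WithBot.coe_ne_bot h
  · intro h
    rw [h, deg, if_pos rfl]

lemma deg_mul (p q : MvPolynomial (Fin 2) k) : deg k (p * q) = deg k p + deg k q := by
  by_cases hp : p = 0
  · rw [hp, zero_mul]
    rw [show deg k (0 : MvPolynomial (Fin 2) k) = ⊥ from if_pos rfl, WithBot.bot_add]
  by_cases hq : q = 0
  · rw [hq, mul_zero]
    rw [show deg k (0 : MvPolynomial (Fin 2) k) = ⊥ from if_pos rfl, WithBot.add_bot]
  have hpq : p * q ≠ 0 := mul_ne_zero hp hq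
  rw [deg_of_ne k hp, deg_of_ne k hq, deg_of_ne k hpq]
  rw [map_mul, ordN_mul k (Phi_ne k hp) (Phi_ne k hq)]
  rw [← WithBot.coe_add]
  congr 1
  push_cast
  ring

lemma deg_add (p q : MvPolynomial (Fin 2) k) : deg k (p + q) ≤ max (deg k p) (deg k q) := by
  by_cases hpq : p + q = 0
  · rw [deg, if_pos hpq]; exact bot_le
  by_cases hp : p = 0
  · rw [hp, zero_add]; exact le_max_right _ _
  by_cases hq : q = 0
  · rw [hq, add_zero]; exact le_max_left _ _
  rw [deg_of_ne k hp, deg_of_ne k hq, deg_of_ne k hpq]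
  set u := ordN k (Phi k p)
  set v := ordN k (Phi k q)
  have hmin : ∀ j, j < min u v → PowerSeries.coeff j (Phi k (p + q)) = 0 := by
    intro j hj
    rw [map_add, map_add]
    rw [coeff_lt_ordN k (by omega : j < u), coeff_lt_ordN k (by omega : j < v), add_zero]
  have hge : min u v ≤ ordN k (Phi k (p + q)) := by
    have hne := Phi_ne k hpq
    rw [ordN, dif_neg hne]
    rw [Nat.le_find_iff]
    intro m hm
    push_neg
    exact hmin m hm
  rcases le_total u v with h | h
  · apply le_trans _ (le_max_left _ _)
    apply WithBot.coe_le_coe.2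
    have : min u v = u := by omega
    omega
  · apply le_trans _ (le_max_right _ _)
    apply WithBot.coe_le_coe.2
    have : min u v = v := by omega
    omega

lemma isDegreeFunction : IsDegreeFunction (deg k) :=
  ⟨deg_bot_iff k, deg_mul k, deg_add k⟩

lemma deg_C {lam : k} (h : lam ≠ 0) : deg k (MvPolynomial.C lam) = 0 := by
  have hC : (MvPolynomial.C lam : MvPolynomial (Fin 2) k) ≠ 0 := by
    simpa using h
  rw [deg_of_ne k hC]
  have hval : Phi k (MvPolynomial.C lam) = PowerSeries.C lam := by
    simp [Phi, PowerSeries.C_eq_algebraMap]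
  have : ordN k (Phi k (MvPolynomial.C lam)) = 0 := by
    apply ordN_unique
    · rw [hval, PowerSeries.coeff_zero_C]; exact h
    · intro j hj; omega
  rw [this]
  norm_num

/-! ### test polynomials -/

def pp (n : ℕ) : MvPolynomial (Fin 2) k :=
  X 1 - ∑ i ∈ range n, (X 0) ^ (cc i)

lemma Phi_X0 : Phi k (X 0) = PowerSeries.X := by simp [Phi]

lemma Phi_X1 : Phi k (X 1) = ss k := by simp [Phi]

lemma Phi_pp (n : ℕ) : Phi k (pp k n) = rho k n := by
  rw [pp, map_sub, map_sum, Phi_X1]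
  have : ∀ i ∈ range n, Phi k ((X 0 : MvPolynomial (Fin 2) k) ^ (cc i))
      = PowerSeries.X ^ (cc i) := by
    intro i _
    rw [map_pow, Phi_X0]
  rw [Finset.sum_congr rfl this, ← sig, ss_sub_sig]

lemma pp_ne (n : ℕ) : pp k n ≠ 0 := by
  intro h
  apply rho_ne_zero k n
  rw [← Phi_pp, h, map_zero]

lemma D_pp (D : Derivation k (MvPolynomial (Fin 2) k) (MvPolynomial (Fin 2) k)) (n : ℕ) :
    D (pp k n) = D (X 1) - ∑ i ∈ range n, (cc i) • ((X 0) ^ (cc i - 1) * D (X 0)) := by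
  rw [pp, map_sub, map_sum]
  congr 1
  apply Finset.sum_congr rfl
  intro i _
  rw [Derivation.leibniz_pow, smul_eq_mul]

lemma Phi_D_pp (D : Derivation k (MvPolynomial (Fin 2) k) (MvPolynomial (Fin 2) k)) (n : ℕ) :
    Phi k (D (pp k n)) = Phi k (D (X 1)) - sig' k n * Phi k (D (X 0)) := by
  rw [D_pp, map_sub, map_sum]
  congr 1
  rw [sig', Finset.sum_mul]
  apply Finset.sum_congr rfl
  intro i _
  rw [map_nsmul, map_mul, map_pow, Phi_X0, smul_mul_assoc, Nat.cast_smul_eq_nsmul k]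

/-! ### Case B: a tangential derivation is impossible -/

lemma caseB (f g : MvPolynomial (Fin 2) k) (hfF : Phi k f ≠ 0)
    (hrel : Phi k g = ss' k * Phi k f) : False := by
  set F := Phi k f with hFdef
  set G := Phi k g with hGdef
  set m := ordN k F with hmdef
  have ha : PowerSeries.coeff m F ≠ 0 := coeff_ordN_ne k hfF
  set Qf := Psi k f with hQf
  set Qg := Psi k g with hQg
  set bg := PowerSeries.coeff (m-1) (Polynomial.eval (ss k) (Polynomial.derivative Qg)) with hbg
  set bf := PowerSeries.coeff (m-1) (ss' k * Polynomial.eval (ss k) (Polynomial.derivative Qf)) with hbf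
  set T := max f.totalDegree g.totalDegree + 1 with hT
  obtain ⟨N1, hN1⟩ := cc_growth T 2
  obtain ⟨N2, hN2⟩ := cc_growth 1 (m+1)
  set N := max N1 N2 with hN
  have key : ∀ n, N ≤ n →
      ((cc (n+1) : k)) * PowerSeries.coeff m F = (if m = 0 then 0 else bg - bf) := by
    intro n hn
    have hn1 : N1 ≤ n := le_trans (le_max_left _ _) hn
    have hn2 : N2 ≤ n := le_trans (le_max_right _ _) hn
    set cN := cc (n+1) with hcN
    have hone : 1 ≤ cN := one_le_cc (n+1)
    have hmlt : m + 1 < cN := by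
      have := hN2 n hn2
      have := one_le_cc n
      omega
    have hC1 : cN + m + 1 < cc (n+2) := by
      have hstep : 1 * cc (n+1) + (m+1) < cc (n+2) := hN2 (n+1) (by omega)
      have := one_le_cc (n+1)
      omega
    set σp := sig k (n+1) with hσp
    set ρp := rho k (n+1) with hρp
    set σp' := sig' k (n+1) with hσp'
    set ρp' := rho' k (n+1) with hρp'
    have hssum : ss k = σp + ρp := ss_eq k (n+1)
    have hss'sum : ss' k = σp' + ρp' := by
      rw [hσp', hρp', ← ss'_sub_sig' k (n+1)]; ring
    set zf := Polynomial.eval σp (Polynomial.derivative Qf) with hzf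
    set zg := Polynomial.eval σp (Polynomial.derivative Qg) with hzg
    set Fn := Polynomial.eval σp Qf with hFn
    set Gn := Polynomial.eval σp Qg with hGn
    have hFn' : Fn = (aeval ![PowerSeries.X, σp]) f := by rw [hFn, hQf, eval_Psi]
    have hGn' : Gn = (aeval ![PowerSeries.X, σp]) g := by rw [hGn, hQg, eval_Psi]
    obtain ⟨Kf, hKf⟩ := Polynomial.binomExpansion Qf σp ρp
    obtain ⟨Kg, hKg⟩ := Polynomial.binomExpansion Qg σp ρp
    have h2 : F = Fn + zf * ρp + Kf * ρp^2 := by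
      rw [hFdef, Phi_eval, ← hQf, hssum, hKf, hFn, hzf]
    have h1 : G = Gn + zg * ρp + Kg * ρp^2 := by
      rw [hGdef, Phi_eval, ← hQg, hssum, hKg, hGn, hzg]
    have h3 : G = (σp' + ρp') * F := by rw [hrel, hss'sum]
    have hA : Gn - σp' * Fn
        = ρp' * F - zg * ρp - Kg * ρp^2 + σp' * (zf * ρp) + σp' * (Kf * ρp^2) := by
      linear_combination σp' * h2 + h3 - h1
    -- divisibility facts
    have hXρ : (PowerSeries.X : PowerSeries k) ^ (cN - 1) ∣ ρp :=
      dvd_trans (pow_dvd_pow _ (by omega)) (X_pow_dvd_rho k (n+1))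
    have hXρfull : (PowerSeries.X : PowerSeries k) ^ cN ∣ ρp := X_pow_dvd_rho k (n+1)
    have hXρ' : (PowerSeries.X : PowerSeries k) ^ (cN - 1) ∣ ρp' := X_pow_dvd_rho' k (n+1)
    have hdvdA : (PowerSeries.X : PowerSeries k) ^ (cN - 1) ∣ (Gn - σp' * Fn) := by
      rw [hA]
      apply dvd_add
      apply dvd_add
      apply dvd_sub
      apply dvd_sub
      · exact hXρ'.mul_right F
      · exact hXρ.mul_left zg
      · have hrw : Kg * ρp^2 = (Kg * ρp) * ρp := by ring
        rw [hrw]; exact hXρ.mul_left (Kg * ρp)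
      · have hrw : σp' * (zf * ρp) = (σp' * zf) * ρp := by ring
        rw [hrw]; exact hXρ.mul_left (σp' * zf)
      · have hrw : σp' * (Kf * ρp^2) = (σp' * Kf * ρp) * ρp := by ring
        rw [hrw]; exact hXρ.mul_left (σp' * Kf * ρp)
    have hdegA : DegLe k (T * cc n) (Gn - σp' * Fn) := by
      rw [hGn', hFn', hσp']
      apply degLe_sub
      · apply degLe_mono k (degLe_aeval k (degLe_X k (one_le_cc n)) (degLe_sig k n) g)
        apply Nat.mul_le_mul_right
        omega
      · have := degLe_mul k (degLe_sig' k n) (degLe_aeval k (degLe_X k (one_le_cc n)) (degLe_sig k n) f)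
        apply degLe_mono k this
        have hfT : f.totalDegree + 1 ≤ T := by omega
        calc cc n + f.totalDegree * cc n = (f.totalDegree + 1) * cc n := by ring
          _ ≤ T * cc n := Nat.mul_le_mul_right _ hfT
    have hA0 : Gn - σp' * Fn = 0 := by
      apply eq_zero_of_degLe k hdegA
      refine dvd_trans (pow_dvd_pow _ ?_) hdvdA
      have := hN1 n hn1
      omega
    have heq : ρp' * F - zg * ρp - Kg * ρp^2 + σp' * (zf * ρp) + σp' * (Kf * ρp^2) = 0 := by
      rw [← hA, hA0]
    set j := cN - 1 + m with hj
    have hco := congrArg (PowerSeries.coeff j) heq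
    rw [map_add, map_add, map_sub, map_sub, map_zero] at hco
    -- t1
    have t1 : PowerSeries.coeff j (ρp' * F) = (cN : k) * PowerSeries.coeff m F := by
      rw [hρp', rho'_succ k (n+1), add_mul, smul_mul_assoc, map_add, map_smul, smul_eq_mul]
      have hjm : j = m + (cN - 1) := by omega
      rw [hjm, PowerSeries.coeff_X_pow_mul]
      have hzero : PowerSeries.coeff (m + (cN - 1)) (rho' k (n+2) * F) = 0 := by
        apply coeff_zero_of_X_pow_dvd k ((X_pow_dvd_rho' k (n+2)).mul_right F)
        have := hC1
        omega
      rw [hzero, add_zero, ← hcN]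
    -- t2
    have t2 : PowerSeries.coeff j (zg * ρp) = if m = 0 then 0 else bg := by
      rw [hρp, rho_succ k (n+1), mul_add, map_add]
      have hzero : PowerSeries.coeff j (zg * rho k (n+2)) = 0 := by
        apply coeff_zero_of_X_pow_dvd k ((X_pow_dvd_rho k (n+2)).mul_left zg)
        omega
      rw [hzero, add_zero]
      by_cases hm0 : m = 0
      · rw [if_pos hm0]
        apply coeff_zero_of_X_pow_dvd k (Dvd.intro_left zg rfl : _)
        · omega
      · rw [if_neg hm0]
        rw [mul_comm zg]
        have hjm : j = (m - 1) + cN := by omega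
        rw [hjm, PowerSeries.coeff_X_pow_mul]
        rw [hbg]
        apply coeff_eq_of_sub_dvd k (N := cN)
        · have hdvd := Polynomial.sub_dvd_eval_sub σp (ss k) (Polynomial.derivative Qg)
          have hXss : (PowerSeries.X : PowerSeries k) ^ cN ∣ σp - ss k := by
            have : σp - ss k = -ρp := by rw [hssum]; ring
            rw [this]
            exact dvd_neg.2 hXρfull
          exact dvd_trans hXss hdvd
        · omega
    -- t3
    have hXρ2 : (PowerSeries.X : PowerSeries k) ^ (cN + cN) ∣ ρp ^ 2 := by
      have : ρp^2 = ρp * ρp := by ring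
      rw [this, pow_add]
      exact mul_dvd_mul hXρfull hXρfull
    have t3 : PowerSeries.coeff j (Kg * ρp^2) = 0 := by
      apply coeff_zero_of_X_pow_dvd k (hXρ2.mul_left Kg)
      omega
    -- t4
    have t4 : PowerSeries.coeff j (σp' * (zf * ρp)) = if m = 0 then 0 else bf := by
      rw [← mul_assoc]
      rw [hρp, rho_succ k (n+1), mul_add, map_add]
      have hzero : PowerSeries.coeff j ((σp' * zf) * rho k (n+2)) = 0 := by
        apply coeff_zero_of_X_pow_dvd k ((X_pow_dvd_rho k (n+2)).mul_left (σp' * zf))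
        omega
      rw [hzero, add_zero]
      by_cases hm0 : m = 0
      · rw [if_pos hm0]
        apply coeff_zero_of_X_pow_dvd k (Dvd.intro_left (σp' * zf) rfl : _)
        · omega
      · rw [if_neg hm0]
        rw [mul_comm (σp' * zf)]
        have hjm : j = (m - 1) + cN := by omega
        rw [hjm, PowerSeries.coeff_X_pow_mul]
        rw [hbf]
        apply coeff_eq_of_sub_dvd k (N := cN - 1)
        · apply X_pow_dvd_mul_congr
          · have : σp' - ss' k = -ρp' := by rw [hss'sum]; ring
            rw [this]
            exact dvd_neg.2 hXρ'
          · have hdvd := Polynomial.sub_dvd_eval_sub σp (ss k) (Polynomial.derivative Qf)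
            have hXss : (PowerSeries.X : PowerSeries k) ^ (cN - 1) ∣ σp - ss k := by
              have : σp - ss k = -ρp := by rw [hssum]; ring
              rw [this]
              exact dvd_neg.2 hXρ
            exact dvd_trans hXss hdvd
        · omega
    -- t5
    have t5 : PowerSeries.coeff j (σp' * (Kf * ρp^2)) = 0 := by
      have hrw : σp' * (Kf * ρp^2) = (σp' * Kf) * ρp^2 := by ring
      rw [hrw]
      apply coeff_zero_of_X_pow_dvd k (hXρ2.mul_left (σp' * Kf))
      omega
    rw [t1, t2, t3, t4, t5] at hco
    by_cases hm0 : m = 0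
    · simp only [if_pos hm0] at hco ⊢
      linear_combination hco
    · simp only [if_neg hm0] at hco ⊢
      linear_combination hco
  -- derive the contradiction from key
  by_cases hm0 : m = 0
  · have h1 := key N le_rfl
    rw [if_pos hm0] at h1
    have hccne : ((cc (N+1) : k)) ≠ 0 := Nat.cast_ne_zero.2 (by have := one_le_cc (N+1); omega)
    exact ha (by
      rcases mul_eq_zero.1 h1 with h | h
      · exact absurd h hccne
      · exact h)
  · have h1 := key N le_rfl
    have h2 := key (N+1) (by omega)
    rw [if_neg hm0] at h1 h2
    have hsub : ((cc (N+2) : k) - (cc (N+1) : k)) * PowerSeries.coeff m F = 0 := by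
      rw [sub_mul, h1, h2, sub_self]
    rcases mul_eq_zero.1 hsub with h | h
    · have : (cc (N+2) : k) = (cc (N+1) : k) := sub_eq_zero.mp h
      have := Nat.cast_inj (R := k) |>.1 this
      have hlt : cc (N+1) < cc (N+2) := cc_strictMono (by omega)
      omega
    · exact ha h

/-! ### Main theorem -/

theorem main (D : Derivation k (MvPolynomial (Fin 2) k) (MvPolynomial (Fin 2) k))
    (hD : DegreeDefinedAt (deg k) ⇑D) : D = 0 := by
  by_cases hh : Phi k (D (X 1)) - ss' k * Phi k (D (X 0)) = 0
  · by_cases hfF : Phi k (D (X 0)) = 0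
    · have hf0 : D (X 0) = 0 := Phi_eq_zero k hfF
      have hg0 : D (X 1) = 0 := by
        apply Phi_eq_zero k
        have := sub_eq_zero.mp hh
        rw [this, hfF, mul_zero]
      apply derivation_ext
      intro i
      fin_cases i
      · simpa using hf0
      · simpa using hg0
    · exact (caseB k (D (X 0)) (D (X 1)) hfF (sub_eq_zero.mp hh)).elim
  · exfalso
    obtain ⟨M, _, hMub⟩ := hD
    set h0 := Phi k (D (X 1)) - ss' k * Phi k (D (X 0)) with hh0
    set r := ordN k h0 with hr
    have hmain : ∀ n, r + 2 ≤ n →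
        (((cc n : ℤ) - (r : ℤ) : ℤ) : WithBot ℤ) ∈ degDeltaSet (deg k) ⇑D := by
      intro n hn
      have hrn : r + 1 < cc n := by
        have h1 : n < cc n := lt_cc n
        omega
      have hΦD : Phi k (D (pp k n)) = h0 + rho' k n * Phi k (D (X 0)) := by
        rw [Phi_D_pp, hh0]
        have hss'n : ss' k = sig' k n + rho' k n := by rw [← ss'_sub_sig' k n]; ring
        rw [hss'n]; ring
      have hcoeffr : PowerSeries.coeff r (Phi k (D (pp k n))) ≠ 0 := by
        rw [hΦD, map_add]
        have hz : PowerSeries.coeff r (rho' k n * Phi k (D (X 0))) = 0 := by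
          apply coeff_zero_of_X_pow_dvd k ((X_pow_dvd_rho' k n).mul_right _)
          omega
        rw [hz, add_zero]
        exact coeff_ordN_ne k hh
      have hPhiDne : Phi k (D (pp k n)) ≠ 0 := by
        intro hzz
        rw [hzz, map_zero] at hcoeffr
        exact hcoeffr rfl
      have hordD : ordN k (Phi k (D (pp k n))) = r := by
        apply ordN_unique
        · exact hcoeffr
        · intro jj hjj
          rw [hΦD, map_add]
          have hz1 : PowerSeries.coeff jj h0 = 0 := coeff_lt_ordN k (by omega)
          have hz2 : PowerSeries.coeff jj (rho' k n * Phi k (D (X 0))) = 0 := by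
            apply coeff_zero_of_X_pow_dvd k ((X_pow_dvd_rho' k n).mul_right _)
            omega
          rw [hz1, hz2, add_zero]
      have hDppne : D (pp k n) ≠ 0 := by
        intro hz
        apply hPhiDne
        rw [hz, map_zero]
      refine ⟨pp k n, pp_ne k n, ?_⟩
      have hdegD : deg k (D (pp k n)) = ((-(r:ℤ) : ℤ) : WithBot ℤ) := by
        rw [deg_of_ne k hDppne, hordD]
      have hordp : ordN k (Phi k (pp k n)) = cc n := by
        rw [Phi_pp]; exact ordN_rho k n
      have hdegp : deg k (pp k n) = ((-(cc n : ℤ) : ℤ) : WithBot ℤ) := by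
        rw [deg_of_ne k (pp_ne k n), hordp]
      simp only [degDelta, hdegD, hdegp, WithBot.unbotD_coe, WithBot.map_coe]
      congr 1
      ring
    rcases M with _ | mM
    · have := hMub (hmain (r+2) le_rfl)
      exact absurd this (WithBot.not_coe_le_bot _)
    · set n := r + mM.toNat + 3 with hn
      have hmem := hMub (hmain n (by omega))
      have hmem' : ((cc n : ℤ) - (r : ℤ)) ≤ mM := by
        rw [show (some mM : WithBot ℤ) = ((mM : ℤ) : WithBot ℤ) from rfl] at hmem
        exact_mod_cast hmem
      have h1 : n < cc n := lt_cc n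
      omega

end
end DegProof

theorem stmt0 (k : Type*) [Field k] [CharZero k] :
    ∃ deg : MvPolynomial (Fin 2) k → WithBot ℤ,
      IsDegreeFunction deg ∧
      (∀ lam : k, lam ≠ 0 → deg (MvPolynomial.C lam) = 0) ∧
      ∀ D : Derivation k (MvPolynomial (Fin 2) k) (MvPolynomial (Fin 2) k),
        DegreeDefinedAt deg ⇑D → D = 0 :=
  ⟨DegProof.deg k, DegProof.isDegreeFunction k, fun _ hl => DegProof.deg_C k hl,
    fun D hD => DegProof.main k D hD⟩
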